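/- arXiv:2604.20339 — 2 statements merged into one kernel-verified Lean document; each statement's English description precedes it below -/
import Mathlib

section
/- (Compact embedding of D(A) into V) Let (u_n)_{n∈ℕ} be a sequence of functions in D(A) such that sup_n (∫_{−1}^{1} u_n(x)² dx + ∫_{−1}^{1} (Au_n)(x)² dx) < ∞. Then there exist a subsequence (u_{n_k}) and a function u∈V such that ‖u_{n_k} − u‖_V → 0 as k→∞, i.e. ∫_{−1}^{1} (u_{n_k}−u)² dx + ∫_{−1}^{1} (1−x²)·(u_{n_k}′−u′)² dx → 0. -/
open MeasureTheory Set Filter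
open Real Topology BoundedContinuousFunction

noncomputable section

/-- `u` belongs to the domain `D(A)` of the degenerate operator `A u = ((1-x²)u')'` on
`I = (-1,1)`: `u ∈ L²(I)` is locally absolutely continuous on `I` with a.e. derivative `u'`,
and `x ↦ (1-x²)u'(x)` extends to an absolutely continuous function on `[-1,1]` vanishing at
`x = ±1`, whose a.e. derivative `Au` belongs to `L²(I)`. -/
structure MemDA (u u' Au : ℝ → ℝ) : Prop where
  sq_int : IntegrableOn (fun x => u x ^ 2) (Ioo (-1:ℝ) 1)
  locAC : ∀ a b : ℝ, a ∈ Ioo (-1:ℝ) 1 → b ∈ Ioo (-1:ℝ) 1 →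
      u b - u a = ∫ t in a..b, u' t
  deriv_intble : ∀ a b : ℝ, a ∈ Ioo (-1:ℝ) 1 → b ∈ Ioo (-1:ℝ) 1 →
      IntervalIntegrable u' volume a b
  Au_intble : IntervalIntegrable Au volume (-1) 1
  Au_sq_int : IntegrableOn (fun x => Au x ^ 2) (Ioo (-1:ℝ) 1)
  flux : ∀ x ∈ Ioo (-1:ℝ) 1, (1 - x ^ 2) * u' x = ∫ t in (-1:ℝ)..x, Au t
  flux_one : (∫ t in (-1:ℝ)..(1:ℝ), Au t) = 0

/-- `u` belongs to the weighted space `V` on `I = (-1,1)`, with a.e. derivative `u'`. -/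
structure MemV (u u' : ℝ → ℝ) : Prop where
  sq_int : IntegrableOn (fun x => u x ^ 2) (Ioo (-1:ℝ) 1)
  locAC : ∀ a b : ℝ, a ∈ Ioo (-1:ℝ) 1 → b ∈ Ioo (-1:ℝ) 1 →
      u b - u a = ∫ t in a..b, u' t
  deriv_intble : ∀ a b : ℝ, a ∈ Ioo (-1:ℝ) 1 → b ∈ Ioo (-1:ℝ) 1 →
      IntervalIntegrable u' volume a b
  wsq_int : IntegrableOn (fun x => (1 - x ^ 2) * u' x ^ 2) (Ioo (-1:ℝ) 1)

lemma arc_int : IntegrableOn (fun t : ℝ => 1 / Real.sqrt (1 - t^2)) (Ioc (-1:ℝ) 1) := by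
  apply intervalIntegral.integrableOn_deriv_of_nonneg (g := Real.arcsin)
  · exact Real.continuous_arcsin.continuousOn
  · intro x hx
    exact Real.hasDerivAt_arcsin (ne_of_gt hx.1) (ne_of_lt hx.2)
  · intro x _
    positivity

lemma arc_ii {c d : ℝ} (h1 : -1 ≤ c) (h2 : c ≤ d) (h3 : d ≤ 1) :
    IntervalIntegrable (fun t : ℝ => 1 / Real.sqrt (1 - t^2)) volume c d := by
  rw [intervalIntegrable_iff_integrableOn_Ioc_of_le h2]
  exact arc_int.mono_set (Ioc_subset_Ioc h1 h3)

lemma arc_eval {c d : ℝ} (h1 : -1 ≤ c) (h2 : c ≤ d) (h3 : d ≤ 1) :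
    ∫ t in c..d, 1 / Real.sqrt (1 - t^2) = Real.arcsin d - Real.arcsin c := by
  apply intervalIntegral.integral_eq_sub_of_hasDeriv_right_of_le h2
    Real.continuous_arcsin.continuousOn
  · intro x hx
    exact (Real.hasDerivAt_arcsin (by nlinarith [hx.1] : x ≠ -1)
      (by nlinarith [hx.2] : x ≠ 1)).hasDerivWithinAt
  · exact arc_ii h1 h2 h3

lemma cs_Ioc {f : ℝ → ℝ} {a c : ℝ} (h : a ≤ c) (hf : IntegrableOn f (Ioc a c))
    (hf2 : IntegrableOn (fun x => f x ^ 2) (Ioc a c)) :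
    (∫ x in Ioc a c, f x) ^ 2 ≤ (c - a) * ∫ x in Ioc a c, f x ^ 2 := by
  rcases eq_or_lt_of_le h with rfl | hlt
  · simp
  set μ := c - a with hμ
  have hμ0 : 0 < μ := by linarith
  set m := (∫ x in Ioc a c, f x) / μ with hm
  have hvol : (volume (Ioc a c)).toReal = μ := by
    rw [Real.volume_Ioc, ENNReal.toReal_ofReal (by linarith)]
  have hconst : IntegrableOn (fun _ : ℝ => m ^ 2) (Ioc a c) :=
    integrableOn_const measure_Ioc_lt_top.ne
  have h1 : IntegrableOn (fun x => f x ^ 2 - (2*m) * f x) (Ioc a c) := hf2.sub (hf.const_mul (2*m))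
  have h0 : 0 ≤ ∫ x in Ioc a c, (f x - m) ^ 2 :=
    setIntegral_nonneg measurableSet_Ioc (fun x _ => sq_nonneg _)
  have hexp : ∫ x in Ioc a c, (f x - m) ^ 2
      = (∫ x in Ioc a c, f x ^ 2) - (2*m) * (∫ x in Ioc a c, f x) + m^2 * μ := by
    have e1 : ∫ x in Ioc a c, (f x - m) ^ 2
        = ∫ x in Ioc a c, (f x ^ 2 - (2*m) * f x) + m ^ 2 := by
      congr 1; funext x; ring
    rw [e1, integral_add h1 hconst, integral_sub hf2 (hf.const_mul (2*m)),
      integral_const, integral_const_mul, measureReal_def, Measure.restrict_apply_univ, hvol]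
    simp only [smul_eq_mul]; ring
  rw [hexp] at h0
  have hmm : m * μ = ∫ x in Ioc a c, f x := by rw [hm, div_mul_cancel₀ _ hμ0.ne']
  nlinarith [h0, sq_nonneg m]

def AuI (Au : ℝ → ℝ) : ℝ → ℝ := (Ioo (-1:ℝ) 1).indicator Au
def Fc (Au : ℝ → ℝ) : ℝ → ℝ := fun x => ∫ t in (-1:ℝ)..x, AuI Au t
def uI (u' : ℝ → ℝ) : ℝ → ℝ := (Ioo (-1:ℝ) 1).indicator u'
def Uc (u u' : ℝ → ℝ) : ℝ → ℝ := fun x => u 0 + ∫ t in (0:ℝ)..x, uI u' t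

structure Good (u u' Au : ℝ → ℝ) (b : ℝ) : Prop where
  hb : 1 ≤ b
  Fc_cont : Continuous (Fc Au)
  Fc_sq : ∀ x ∈ Icc (-1:ℝ) 1, (Fc Au x)^2 ≤ b * (1 - x^2)
  u'_eq : ∀ x ∈ Ioo (-1:ℝ) 1, u' x = Fc Au x / (1 - x^2)
  Fc_mod : ∀ x ∈ Icc (-1:ℝ) 1, ∀ y ∈ Icc (-1:ℝ) 1,
      |Fc Au y - Fc Au x| ≤ Real.sqrt b * Real.sqrt |y - x|
  Uc_cont : Continuous (Uc u u')
  Uc_eq : ∀ x ∈ Ioo (-1:ℝ) 1, Uc u u' x = u x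
  Uc_mod : ∀ x ∈ Icc (-1:ℝ) 1, ∀ y ∈ Icc (-1:ℝ) 1,
      |Uc u u' y - Uc u u' x| ≤ Real.sqrt b * |Real.arcsin y - Real.arcsin x|
  Uc_bnd : ∀ x ∈ Icc (-1:ℝ) 1, |Uc u u' x| ≤ Real.sqrt b * (1 + π)

lemma mkGood {u u' Au : ℝ → ℝ} {b : ℝ} (h : MemDA u u' Au) (hb : 1 ≤ b)
    (hu2 : (∫ x in Ioo (-1:ℝ) 1, u x ^ 2) ≤ b)
    (hA2 : (∫ x in Ioo (-1:ℝ) 1, Au x ^ 2) ≤ b) : Good u u' Au b := by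
  have hb0 : (0:ℝ) < b := lt_of_lt_of_le one_pos hb
  have hAuIoc : IntegrableOn Au (Ioc (-1:ℝ) 1) := by
    have h1 := h.Au_intble
    rwa [intervalIntegrable_iff_integrableOn_Ioc_of_le (by norm_num)] at h1
  have hAuI_int : Integrable (AuI Au) := by
    rw [AuI, integrable_indicator_iff measurableSet_Ioo]
    exact hAuIoc.mono_set Ioo_subset_Ioc_self
  have hAuI_ii : ∀ a c : ℝ, IntervalIntegrable (AuI Au) volume a c :=
    fun a c => hAuI_int.intervalIntegrable
  have Fc_cont : Continuous (Fc Au) := intervalIntegral.continuous_primitive hAuI_ii (-1)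
  have ae_ne_one : ∀ᵐ t : ℝ, t ≠ (1:ℝ) := by
    rw [ae_iff]
    convert volume_singleton (a := (1:ℝ)) using 2
    ext t; simp [not_not]
  have Fc_eq : ∀ x ∈ Icc (-1:ℝ) 1, Fc Au x = ∫ t in (-1:ℝ)..x, Au t := by
    intro x hx
    rw [Fc, intervalIntegral.integral_of_le hx.1, intervalIntegral.integral_of_le hx.1]
    apply setIntegral_congr_ae measurableSet_Ioc
    filter_upwards [ae_ne_one] with t ht hmem
    have htm : t ∈ Ioo (-1:ℝ) 1 := ⟨hmem.1, lt_of_le_of_ne (le_trans hmem.2 hx.2) ht⟩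
    simp [AuI, indicator_of_mem htm]
  have Fc_flux : ∀ x ∈ Ioo (-1:ℝ) 1, (1 - x^2) * u' x = Fc Au x := by
    intro x hx
    rw [Fc_eq x (Ioo_subset_Icc_self hx)]
    exact h.flux x hx
  have u'_eq : ∀ x ∈ Ioo (-1:ℝ) 1, u' x = Fc Au x / (1 - x^2) := by
    intro x hx
    have h1x : (0:ℝ) < 1 - x^2 := by nlinarith [hx.1, hx.2]
    field_simp
    linarith [Fc_flux x hx]
  have hsq_ind : (fun t => AuI Au t ^ 2) = (Ioo (-1:ℝ) 1).indicator (fun t => Au t ^ 2) := by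
    funext t; by_cases ht : t ∈ Ioo (-1:ℝ) 1 <;> simp [AuI, ht]
  have hAuI2_int : Integrable (fun t => AuI Au t ^ 2) := by
    rw [hsq_ind, integrable_indicator_iff measurableSet_Ioo]; exact h.Au_sq_int
  have hAuI2_bnd : ∀ s : Set ℝ, ∫ t in s, AuI Au t ^ 2 ≤ b := by
    intro s
    calc ∫ t in s, AuI Au t ^ 2
        ≤ ∫ t, AuI Au t ^ 2 :=
          setIntegral_le_integral hAuI2_int (Eventually.of_forall fun t => sq_nonneg _)
      _ = ∫ t in Ioo (-1:ℝ) 1, Au t ^ 2 := by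
          rw [hsq_ind, integral_indicator measurableSet_Ioo]
      _ ≤ b := hA2
  have Fc_one : Fc Au 1 = 0 := by
    rw [Fc_eq 1 (by norm_num)]; exact h.flux_one
  have csL : ∀ x ∈ Icc (-1:ℝ) 1, (Fc Au x)^2 ≤ b * (1 + x) := by
    intro x hx
    rw [Fc, intervalIntegral.integral_of_le hx.1]
    calc (∫ t in Ioc (-1:ℝ) x, AuI Au t)^2
        ≤ (x - (-1)) * ∫ t in Ioc (-1:ℝ) x, AuI Au t ^ 2 :=
          cs_Ioc hx.1 hAuI_int.integrableOn hAuI2_int.integrableOn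
      _ ≤ (x - (-1)) * b := by
          have := hAuI2_bnd (Ioc (-1:ℝ) x)
          nlinarith [hx.1]
      _ = b * (1 + x) := by ring
  have csR : ∀ x ∈ Icc (-1:ℝ) 1, (Fc Au x)^2 ≤ b * (1 - x) := by
    intro x hx
    have hadd : Fc Au x + ∫ t in x..(1:ℝ), AuI Au t = Fc Au 1 :=
      intervalIntegral.integral_add_adjacent_intervals (hAuI_ii _ _) (hAuI_ii _ _)
    have hFx : Fc Au x = -∫ t in x..(1:ℝ), AuI Au t := by
      rw [Fc_one] at hadd; linarith
    rw [hFx, neg_sq, intervalIntegral.integral_of_le hx.2]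
    calc (∫ t in Ioc x (1:ℝ), AuI Au t)^2
        ≤ (1 - x) * ∫ t in Ioc x (1:ℝ), AuI Au t ^ 2 :=
          cs_Ioc hx.2 hAuI_int.integrableOn hAuI2_int.integrableOn
      _ ≤ (1 - x) * b := by
          have := hAuI2_bnd (Ioc x (1:ℝ))
          nlinarith [hx.2]
      _ = b * (1 - x) := by ring
  have Fc_sq : ∀ x ∈ Icc (-1:ℝ) 1, (Fc Au x)^2 ≤ b * (1 - x^2) := by
    intro x hx
    rcases le_total x 0 with hx0 | hx0
    · nlinarith [csL x hx, hx.1, hx.2, sq_nonneg (Fc Au x)]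
    · nlinarith [csR x hx, hx.1, hx.2, sq_nonneg (Fc Au x)]
  have Fc_mod : ∀ x ∈ Icc (-1:ℝ) 1, ∀ y ∈ Icc (-1:ℝ) 1,
      |Fc Au y - Fc Au x| ≤ Real.sqrt b * Real.sqrt |y - x| := by
    have key : ∀ x ∈ Icc (-1:ℝ) 1, ∀ y ∈ Icc (-1:ℝ) 1, x ≤ y →
        |Fc Au y - Fc Au x| ≤ Real.sqrt b * Real.sqrt (y - x) := by
      intro x hx y hy hxy
      have hadd : Fc Au x + ∫ t in x..y, AuI Au t = Fc Au y :=
        intervalIntegral.integral_add_adjacent_intervals (hAuI_ii _ _) (hAuI_ii _ _)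
      have hdiff : Fc Au y - Fc Au x = ∫ t in Ioc x y, AuI Au t := by
        rw [← intervalIntegral.integral_of_le hxy]; linarith
      rw [hdiff, ← Real.sqrt_mul hb0.le]
      apply Real.abs_le_sqrt
      calc (∫ t in Ioc x y, AuI Au t)^2
          ≤ (y - x) * ∫ t in Ioc x y, AuI Au t ^ 2 :=
            cs_Ioc hxy hAuI_int.integrableOn hAuI2_int.integrableOn
        _ ≤ (y - x) * b := by
            have := hAuI2_bnd (Ioc x y); nlinarith
        _ = b * (y - x) := by ring
    intro x hx y hy
    rcases le_total x y with hxy | hxy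
    · rw [abs_of_nonneg (by linarith : (0:ℝ) ≤ y - x)]
      exact key x hx y hy hxy
    · rw [abs_of_nonpos (by linarith : y - x ≤ 0), abs_sub_comm, ← neg_sub x y]
      simpa using key y hy x hx hxy
  -- facts about u'
  have hIoo : (0:ℝ) < 1 := one_pos
  have h_up : ∀ x ∈ Ioo (-1:ℝ) 1, |u' x| ≤ Real.sqrt b * (1 / Real.sqrt (1 - x^2)) := by
    intro x hx
    have h1x : (0:ℝ) < 1 - x^2 := by nlinarith [hx.1, hx.2]
    have h2 : (u' x)^2 ≤ b / (1 - x^2) := by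
      rw [u'_eq x hx, div_pow, div_le_div_iff₀ (by positivity) h1x]
      nlinarith [Fc_sq x (Ioo_subset_Icc_self hx), sq_nonneg (Fc Au x), h1x]
    have h3 := Real.abs_le_sqrt h2
    rwa [Real.sqrt_div hb0.le, div_eq_mul_one_div] at h3
  have hu'c : ContinuousOn u' (Ioo (-1:ℝ) 1) := by
    apply ContinuousOn.congr (f := fun x => Fc Au x / (1 - x^2))
    · apply Fc_cont.continuousOn.div (by fun_prop)
      intro x hx
      have : (0:ℝ) < 1 - x^2 := by nlinarith [hx.1, hx.2]
      linarith
    · exact u'_eq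
  have huIc : AEStronglyMeasurable (uI u') volume := by
    rw [uI, aestronglyMeasurable_indicator_iff measurableSet_Ioo]
    exact hu'c.aestronglyMeasurable measurableSet_Ioo
  have hmaj : Integrable ((Ioo (-1:ℝ) 1).indicator
      (fun t => Real.sqrt b * (1 / Real.sqrt (1 - t^2)))) := by
    rw [integrable_indicator_iff measurableSet_Ioo]
    exact ((arc_int.mono_set Ioo_subset_Ioc_self).const_mul _)
  have huI_int : Integrable (uI u') := by
    refine hmaj.mono' huIc (Eventually.of_forall fun t => ?_)
    by_cases ht : t ∈ Ioo (-1:ℝ) 1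
    · rw [uI, indicator_of_mem ht, indicator_of_mem ht, Real.norm_eq_abs]
      exact h_up t ht
    · rw [uI, indicator_of_notMem ht, indicator_of_notMem ht]
      simp
  have Uc_cont : Continuous (Uc u u') :=
    continuous_const.add
      (intervalIntegral.continuous_primitive (fun _ _ => huI_int.intervalIntegrable) 0)
  have h0mem : (0:ℝ) ∈ Ioo (-1:ℝ) 1 := by norm_num
  have Uc_eq : ∀ x ∈ Ioo (-1:ℝ) 1, Uc u u' x = u x := by
    intro x hx
    have hsub : uIcc (0:ℝ) x ⊆ Ioo (-1:ℝ) 1 := (ordConnected_Ioo).uIcc_subset h0mem hx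
    have : ∫ t in (0:ℝ)..x, uI u' t = ∫ t in (0:ℝ)..x, u' t := by
      apply intervalIntegral.integral_congr
      intro t ht
      exact indicator_of_mem (hsub ht) u'
    rw [Uc, this, ← h.locAC 0 x h0mem hx]
    ring
  have uI_bnd : ∀ t : ℝ, |uI u' t| ≤ Real.sqrt b * (1 / Real.sqrt (1 - t^2)) := by
    intro t
    by_cases ht : t ∈ Ioo (-1:ℝ) 1
    · rw [uI, indicator_of_mem ht]; exact h_up t ht
    · rw [uI, indicator_of_notMem ht]; simp; positivity
  have Uc_key : ∀ x ∈ Icc (-1:ℝ) 1, ∀ y ∈ Icc (-1:ℝ) 1, x ≤ y →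
      |Uc u u' y - Uc u u' x| ≤ Real.sqrt b * (Real.arcsin y - Real.arcsin x) := by
    intro x hx y hy hxy
    have hadd : (∫ t in (0:ℝ)..x, uI u' t) + ∫ t in x..y, uI u' t = ∫ t in (0:ℝ)..y, uI u' t :=
      intervalIntegral.integral_add_adjacent_intervals huI_int.intervalIntegrable
        huI_int.intervalIntegrable
    have hdiff : Uc u u' y - Uc u u' x = ∫ t in x..y, uI u' t := by
      simp only [Uc]; linarith
    rw [hdiff]
    calc |∫ t in x..y, uI u' t| ≤ ∫ t in x..y, |uI u' t| :=
          intervalIntegral.abs_integral_le_integral_abs hxy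
      _ ≤ ∫ t in x..y, Real.sqrt b * (1 / Real.sqrt (1 - t^2)) := by
          apply intervalIntegral.integral_mono_on hxy huI_int.abs.intervalIntegrable
            ((arc_ii hx.1 hxy hy.2).const_mul _)
          intro t _
          exact uI_bnd t
      _ = Real.sqrt b * (Real.arcsin y - Real.arcsin x) := by
          rw [intervalIntegral.integral_const_mul, arc_eval hx.1 hxy hy.2]
  have Uc_mod : ∀ x ∈ Icc (-1:ℝ) 1, ∀ y ∈ Icc (-1:ℝ) 1,
      |Uc u u' y - Uc u u' x| ≤ Real.sqrt b * |Real.arcsin y - Real.arcsin x| := by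
    intro x hx y hy
    rcases le_total x y with hxy | hxy
    · rw [abs_of_nonneg (sub_nonneg.2 (Real.monotone_arcsin hxy))]
      exact Uc_key x hx y hy hxy
    · rw [abs_sub_comm (Real.arcsin y), abs_of_nonneg (sub_nonneg.2 (Real.monotone_arcsin hxy)),
        abs_sub_comm]
      exact Uc_key y hy x hx hxy
  have hx0 : ∃ x0 ∈ Ioo (-1:ℝ) 1, u x0 ^ 2 ≤ b := by
    by_contra hc
    push_neg at hc
    have hmono : ∫ _x in Ioo (-1:ℝ) 1, b ≤ ∫ x in Ioo (-1:ℝ) 1, u x ^ 2 :=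
      setIntegral_mono_on (integrableOn_const measure_Ioo_lt_top.ne) h.sq_int
        measurableSet_Ioo (fun x hx => (hc x hx).le)
    rw [setIntegral_const, measureReal_def, Real.volume_Ioo, smul_eq_mul] at hmono
    rw [show (1:ℝ) - -1 = 2 by norm_num, ENNReal.toReal_ofReal (by norm_num : (0:ℝ) ≤ 2)] at hmono
    linarith
  have Uc_bnd : ∀ x ∈ Icc (-1:ℝ) 1, |Uc u u' x| ≤ Real.sqrt b * (1 + π) := by
    obtain ⟨x0, hx0m, hx0b⟩ := hx0
    intro x hx
    have h1 : |Uc u u' x0| ≤ Real.sqrt b := by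
      rw [Uc_eq x0 hx0m]; exact Real.abs_le_sqrt hx0b
    have h2 := Uc_mod x0 (Ioo_subset_Icc_self hx0m) x hx
    have h3 : |Real.arcsin x - Real.arcsin x0| ≤ π := by
      have a1 := Real.arcsin_le_pi_div_two x
      have a2 := Real.neg_pi_div_two_le_arcsin x
      have a3 := Real.arcsin_le_pi_div_two x0
      have a4 := Real.neg_pi_div_two_le_arcsin x0
      rw [abs_le]; constructor <;> linarith
    have hsb : (0:ℝ) ≤ Real.sqrt b := Real.sqrt_nonneg b
    calc |Uc u u' x| ≤ |Uc u u' x0| + |Uc u u' x - Uc u u' x0| := by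
          have := abs_add_le (Uc u u' x0) (Uc u u' x - Uc u u' x0)
          simpa using this
      _ ≤ Real.sqrt b + Real.sqrt b * π := by
          have := mul_le_mul_of_nonneg_left h3 hsb
          linarith [h2]
      _ = Real.sqrt b * (1 + π) := by ring
  exact ⟨hb, Fc_cont, Fc_sq, u'_eq, Fc_mod, Uc_cont, Uc_eq, Uc_mod, Uc_bnd⟩

lemma extract {C : ℝ} (f : ℕ → (Icc (-1:ℝ) 1 →ᵇ ℝ))
    (hbnd : ∀ n x, |f n x| ≤ C)
    (hequi : Equicontinuous ((↑) : Set.range f → (Icc (-1:ℝ) 1) → ℝ)) :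
    ∃ (g : Icc (-1:ℝ) 1 →ᵇ ℝ) (φ : ℕ → ℕ), StrictMono φ ∧
      Tendsto (fun k => dist (f (φ k)) g) atTop (𝓝 0) := by
  have hcpt : IsCompact (closure (Set.range f)) := by
    apply BoundedContinuousFunction.arzela_ascoli (Icc (-C) C) isCompact_Icc (Set.range f)
      ?_ hequi
    rintro g x ⟨n, rfl⟩
    exact mem_Icc.2 (abs_le.1 (hbnd n x))
  obtain ⟨g, -, φ, hφ, hconv⟩ := hcpt.tendsto_subseq (fun n => subset_closure (mem_range_self n))
  exact ⟨g, φ, hφ, by simpa [Function.comp] using tendsto_iff_dist_tendsto_zero.1 hconv⟩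

lemma equiF {f : ℕ → (Icc (-1:ℝ) 1 →ᵇ ℝ)} {b : ℝ}
    (hmod : ∀ n (x y : Icc (-1:ℝ) 1), |f n y - f n x| ≤ Real.sqrt b * Real.sqrt |(y:ℝ) - x|) :
    Equicontinuous ((↑) : Set.range f → (Icc (-1:ℝ) 1) → ℝ) := by
  apply Metric.equicontinuous_of_continuity_modulus (fun d => Real.sqrt b * Real.sqrt d)
  · have h1 : Tendsto (fun d : ℝ => Real.sqrt b * Real.sqrt d) (𝓝 0)
        (𝓝 (Real.sqrt b * Real.sqrt 0)) :=
      (continuous_const.mul Real.continuous_sqrt).tendsto 0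
    simpa using h1
  · rintro x y ⟨g, n, rfl⟩
    show dist (f n x) (f n y) ≤ Real.sqrt b * Real.sqrt (dist x y)
    rw [Real.dist_eq, Subtype.dist_eq, Real.dist_eq]
    exact hmod n y x

lemma equiU {f : ℕ → (Icc (-1:ℝ) 1 →ᵇ ℝ)} {b : ℝ}
    (hmod : ∀ n (x y : Icc (-1:ℝ) 1),
      |f n y - f n x| ≤ Real.sqrt b * |Real.arcsin y - Real.arcsin x|) :
    Equicontinuous ((↑) : Set.range f → (Icc (-1:ℝ) 1) → ℝ) := by
  intro x₀
  apply Metric.equicontinuousAt_of_continuity_modulus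
      (fun x : Icc (-1:ℝ) 1 => Real.sqrt b * |Real.arcsin x - Real.arcsin x₀|)
  · have h1 : Continuous (fun x : Icc (-1:ℝ) 1 =>
        Real.sqrt b * |Real.arcsin x - Real.arcsin x₀|) :=
      continuous_const.mul
        (((Real.continuous_arcsin.comp continuous_subtype_val).sub continuous_const).abs)
    have h2 := h1.tendsto x₀
    simpa using h2
  · refine Eventually.of_forall fun x => ?_
    rintro ⟨g, n, rfl⟩
    show dist (f n x₀) (f n x) ≤ Real.sqrt b * |Real.arcsin ↑x - Real.arcsin ↑x₀|
    rw [Real.dist_eq]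
    have h3 := hmod n x x₀
    rwa [abs_sub_comm (Real.arcsin _)] at h3

set_option maxHeartbeats 2000000 in
/-- Compact embedding of `D(A)` into `V`: every `D(A)`-bounded sequence has a subsequence
converging in the `V`-norm to some element of `V`. -/
theorem DA_compactly_embeds_V (u u' Au : ℕ → ℝ → ℝ)
    (hmem : ∀ n, MemDA (u n) (u' n) (Au n))
    (hbdd : ∃ B : ℝ, ∀ n,
      (∫ x in Ioo (-1:ℝ) 1, u n x ^ 2) + (∫ x in Ioo (-1:ℝ) 1, Au n x ^ 2) ≤ B) :
    ∃ φ : ℕ → ℕ, StrictMono φ ∧ ∃ v v' : ℝ → ℝ, MemV v v' ∧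
      Tendsto (fun k =>
          (∫ x in Ioo (-1:ℝ) 1, (u (φ k) x - v x) ^ 2)
            + ∫ x in Ioo (-1:ℝ) 1, (1 - x ^ 2) * (u' (φ k) x - v' x) ^ 2)
        atTop (nhds 0) := by
  classical
  obtain ⟨B, hB⟩ := hbdd
  set b := max B 1 with hbdef
  have hb1 : (1:ℝ) ≤ b := le_max_right _ _
  have hb0 : (0:ℝ) < b := by linarith
  have hsb0 : (0:ℝ) ≤ Real.sqrt b := Real.sqrt_nonneg b
  have hunn : ∀ n, 0 ≤ ∫ x in Ioo (-1:ℝ) 1, u n x ^ 2 :=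
    fun n => setIntegral_nonneg measurableSet_Ioo fun x _ => sq_nonneg _
  have hAnn : ∀ n, 0 ≤ ∫ x in Ioo (-1:ℝ) 1, Au n x ^ 2 :=
    fun n => setIntegral_nonneg measurableSet_Ioo fun x _ => sq_nonneg _
  have G : ∀ n, Good (u n) (u' n) (Au n) b := by
    intro n
    refine mkGood (hmem n) hb1 ?_ ?_
    · exact le_trans (by linarith [hB n, hAnn n]) (le_max_left B 1)
    · exact le_trans (by linarith [hB n, hunn n]) (le_max_left B 1)
  -- bundled continuous functions
  set FB : ℕ → (Icc (-1:ℝ) 1 →ᵇ ℝ) := fun n =>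
    BoundedContinuousFunction.mkOfCompact
      ⟨fun x => Fc (Au n) x, (G n).Fc_cont.comp continuous_subtype_val⟩ with hFB
  set UB : ℕ → (Icc (-1:ℝ) 1 →ᵇ ℝ) := fun n =>
    BoundedContinuousFunction.mkOfCompact
      ⟨fun x => Uc (u n) (u' n) x, (G n).Uc_cont.comp continuous_subtype_val⟩ with hUB
  have hFBapp : ∀ n (z : Icc (-1:ℝ) 1), FB n z = Fc (Au n) z := fun n z => rfl
  have hUBapp : ∀ n (z : Icc (-1:ℝ) 1), UB n z = Uc (u n) (u' n) z := fun n z => rfl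
  have hFcabs : ∀ n, ∀ x ∈ Icc (-1:ℝ) 1, |Fc (Au n) x| ≤ Real.sqrt b * Real.sqrt (1 - x^2) := by
    intro n x hx
    rw [← Real.sqrt_mul hb0.le]
    exact Real.abs_le_sqrt ((G n).Fc_sq x hx)
  -- extraction for FB
  obtain ⟨Flim, φ₁, hφ₁, hconvF₁⟩ := extract (C := Real.sqrt b) FB
    (by
      intro n z
      calc |FB n z| ≤ Real.sqrt b * Real.sqrt (1 - (z:ℝ)^2) := hFcabs n z z.2
        _ ≤ Real.sqrt b * 1 := by
            apply mul_le_mul_of_nonneg_left _ hsb0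
            exact le_trans (Real.sqrt_le_sqrt (by nlinarith [sq_nonneg (z:ℝ)]))
              (le_of_eq Real.sqrt_one)
        _ = Real.sqrt b := mul_one _)
    (equiF (b := b) (fun n x y => (G n).Fc_mod x x.2 y y.2))
  -- extraction for UB ∘ φ₁
  obtain ⟨Ulim, φ₂, hφ₂, hconvU₂⟩ := extract (C := Real.sqrt b * (1 + π)) (fun k => UB (φ₁ k))
    (fun k z => (G (φ₁ k)).Uc_bnd z z.2)
    (equiU (b := b) (fun k x y => (G (φ₁ k)).Uc_mod x x.2 y y.2))
  set φ : ℕ → ℕ := φ₁ ∘ φ₂ with hφdef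
  have hφ : StrictMono φ := hφ₁.comp hφ₂
  have hconvF : Tendsto (fun k => dist (FB (φ k)) Flim) atTop (𝓝 0) :=
    hconvF₁.comp hφ₂.tendsto_atTop
  have hconvU : Tendsto (fun k => dist (UB (φ k)) Ulim) atTop (𝓝 0) := hconvU₂
  have hptF : ∀ z : Icc (-1:ℝ) 1, Tendsto (fun k => (FB (φ k)) z) atTop (𝓝 (Flim z)) := by
    intro z
    rw [tendsto_iff_dist_tendsto_zero]
    exact squeeze_zero (fun k => dist_nonneg)
      (fun k => BoundedContinuousFunction.dist_coe_le_dist z) hconvF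
  have hptU : ∀ z : Icc (-1:ℝ) 1, Tendsto (fun k => (UB (φ k)) z) atTop (𝓝 (Ulim z)) := by
    intro z
    rw [tendsto_iff_dist_tendsto_zero]
    exact squeeze_zero (fun k => dist_nonneg)
      (fun k => BoundedContinuousFunction.dist_coe_le_dist z) hconvU
  -- limit functions
  have h11 : (-1:ℝ) ≤ 1 := by norm_num
  set v : ℝ → ℝ := fun x => Ulim (projIcc (-1) 1 h11 x) with hv
  set Fl : ℝ → ℝ := fun x => Flim (projIcc (-1) 1 h11 x) with hFldef
  set v' : ℝ → ℝ := fun x => Fl x / (1 - x^2) with hv'def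
  have hveq : ∀ x (hx : x ∈ Icc (-1:ℝ) 1), v x = Ulim ⟨x, hx⟩ := by
    intro x hx; rw [hv]; simp only [projIcc_of_mem h11 hx]
  have hFleq : ∀ x (hx : x ∈ Icc (-1:ℝ) 1), Fl x = Flim ⟨x, hx⟩ := by
    intro x hx; rw [hFldef]; simp only [projIcc_of_mem h11 hx]
  have hvc : Continuous v := Ulim.continuous.comp (continuous_projIcc)
  have hFlc : Continuous Fl := Flim.continuous.comp (continuous_projIcc)
  have hFl_sq : ∀ x ∈ Icc (-1:ℝ) 1, (Fl x)^2 ≤ b * (1 - x^2) := by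
    intro x hx
    rw [hFleq x hx]
    apply le_of_tendsto ((hptF ⟨x, hx⟩).pow 2)
    exact Eventually.of_forall fun k => (G (φ k)).Fc_sq x hx
  have hFlabs : ∀ x ∈ Icc (-1:ℝ) 1, |Fl x| ≤ Real.sqrt b * Real.sqrt (1 - x^2) := by
    intro x hx
    rw [← Real.sqrt_mul hb0.le]
    exact Real.abs_le_sqrt (hFl_sq x hx)
  -- continuity facts on Ioo
  have h1x : ∀ x ∈ Ioo (-1:ℝ) 1, (0:ℝ) < 1 - x^2 := fun x hx => by nlinarith [hx.1, hx.2]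
  have hv'c : ContinuousOn v' (Ioo (-1:ℝ) 1) := by
    rw [hv'def]
    exact hFlc.continuousOn.div (by fun_prop) (fun x hx => ne_of_gt (h1x x hx))
  have hIoosub : ∀ {a c : ℝ}, a ∈ Ioo (-1:ℝ) 1 → c ∈ Ioo (-1:ℝ) 1 →
      uIcc a c ⊆ Ioo (-1:ℝ) 1 := fun ha hc => (ordConnected_Ioo).uIcc_subset ha hc
  have hv'ii : ∀ a c : ℝ, a ∈ Ioo (-1:ℝ) 1 → c ∈ Ioo (-1:ℝ) 1 →
      IntervalIntegrable v' volume a c :=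
    fun a c ha hc => (hv'c.mono (hIoosub ha hc)).intervalIntegrable
  have hueq : ∀ n, ∀ x, ∀ hx : x ∈ Ioo (-1:ℝ) 1,
      u n x = UB n ⟨x, Ioo_subset_Icc_self hx⟩ := by
    intro n x hx
    rw [hUBapp]
    exact ((G n).Uc_eq x hx).symm
  have hptu : ∀ x, ∀ hx : x ∈ Ioo (-1:ℝ) 1,
      Tendsto (fun k => u (φ k) x) atTop (𝓝 (v x)) := by
    intro x hx
    have h1 := hptU ⟨x, Ioo_subset_Icc_self hx⟩
    rw [← hveq x (Ioo_subset_Icc_self hx)] at h1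
    exact h1.congr (fun k => (hueq (φ k) x hx).symm)
  have hFldist : ∀ k, ∀ t, ∀ ht : t ∈ Icc (-1:ℝ) 1,
      |Fc (Au (φ k)) t - Fl t| ≤ dist (FB (φ k)) Flim := by
    intro k t ht
    have h2 := BoundedContinuousFunction.dist_coe_le_dist
      (f := FB (φ k)) (g := Flim) ⟨t, ht⟩
    rw [Real.dist_eq, hFBapp, ← hFleq t ht] at h2
    exact h2
  have hlocAC : ∀ a c : ℝ, a ∈ Ioo (-1:ℝ) 1 → c ∈ Ioo (-1:ℝ) 1 →
      v c - v a = ∫ t in a..c, v' t := by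
    intro a c ha hc
    have h1 : Tendsto (fun k => u (φ k) c - u (φ k) a) atTop (𝓝 (v c - v a)) :=
      (hptu c hc).sub (hptu a ha)
    have h2 : Tendsto (fun k => u (φ k) c - u (φ k) a) atTop (𝓝 (∫ t in a..c, v' t)) := by
      have hrw : (fun k => u (φ k) c - u (φ k) a) = fun k => ∫ t in a..c, u' (φ k) t :=
        funext fun k => (hmem (φ k)).locAC a c ha hc
      rw [hrw, tendsto_iff_dist_tendsto_zero]
      set c0 : ℝ := max |a| |c| with hc0
      have hc01 : c0 < 1 := max_lt (abs_lt.2 ⟨ha.1, ha.2⟩) (abs_lt.2 ⟨hc.1, hc.2⟩)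
      have hc00 : 0 ≤ c0 := le_trans (abs_nonneg a) (le_max_left _ _)
      have hm : (0:ℝ) < 1 - c0^2 := by nlinarith
      apply squeeze_zero (fun k => dist_nonneg)
        (g := fun k => dist (FB (φ k)) Flim / (1 - c0^2) * |c - a|)
      · intro k
        rw [Real.dist_eq]
        have heq : (∫ t in a..c, u' (φ k) t) - ∫ t in a..c, v' t
            = ∫ t in a..c, (u' (φ k) t - v' t) := by
          rw [intervalIntegral.integral_sub ((hmem (φ k)).deriv_intble a c ha hc)
            (hv'ii a c ha hc)]
        rw [heq, ← Real.norm_eq_abs]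
        have hbig : ∀ t ∈ Set.uIoc a c, ‖u' (φ k) t - v' t‖ ≤ dist (FB (φ k)) Flim / (1 - c0^2) := by
          intro t ht
          have htIcc : t ∈ uIcc a c := uIoc_subset_uIcc ht
          have htIoo : t ∈ Ioo (-1:ℝ) 1 := hIoosub ha hc htIcc
          have h1t := h1x t htIoo
          have htc0 : t^2 ≤ c0^2 := by
            have h1a : -c0 ≤ a := le_trans (neg_le_neg (le_max_left |a| |c|)) (neg_abs_le a)
            have h1c : -c0 ≤ c := le_trans (neg_le_neg (le_max_right |a| |c|)) (neg_abs_le c)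
            have h2a : a ≤ c0 := le_trans (le_abs_self a) (le_max_left _ _)
            have h2c : c ≤ c0 := le_trans (le_abs_self c) (le_max_right _ _)
            have hta : -c0 ≤ t := le_trans (le_min h1a h1c) (le_of_lt ht.1)
            have htb : t ≤ c0 := le_trans ht.2 (max_le h2a h2c)
            nlinarith
          have hmt : 1 - c0^2 ≤ 1 - t^2 := by linarith
          rw [(G (φ k)).u'_eq t htIoo, hv'def]
          rw [Real.norm_eq_abs, div_sub_div_same, abs_div, abs_of_pos h1t]
          exact div_le_div₀ dist_nonneg (hFldist k t (Ioo_subset_Icc_self htIoo)) hm hmt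
        exact intervalIntegral.norm_integral_le_of_norm_le_const hbig
      · have := (hconvF.div_const (1 - c0^2)).mul_const |c - a|
        simpa using this
    exact tendsto_nhds_unique h1 h2
  have hu'w : ∀ n, ∀ x ∈ Ioo (-1:ℝ) 1, (1 - x^2) * u' n x ^ 2 ≤ b := by
    intro n x hx
    have h1 := h1x x hx
    rw [(G n).u'_eq x hx, div_pow,
      show (1 - x^2) * ((Fc (Au n) x)^2 / (1-x^2)^2) = (Fc (Au n) x)^2 / (1-x^2) from by
        field_simp, div_le_iff₀ h1]
    exact (G n).Fc_sq x (Ioo_subset_Icc_self hx)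
  have hv'w : ∀ x ∈ Ioo (-1:ℝ) 1, (1 - x^2) * v' x ^ 2 ≤ b := by
    intro x hx
    have h1 := h1x x hx
    simp only [hv'def]
    rw [div_pow,
      show (1 - x^2) * ((Fl x)^2 / (1-x^2)^2) = (Fl x)^2 / (1-x^2) from by field_simp,
      div_le_iff₀ h1]
    exact hFl_sq x (Ioo_subset_Icc_self hx)
  have hwsq : IntegrableOn (fun x => (1 - x^2) * v' x ^ 2) (Ioo (-1:ℝ) 1) := by
    apply Integrable.mono' (g := fun _ => b) (integrableOn_const measure_Ioo_lt_top.ne)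
    · exact ((continuousOn_const.sub (continuous_pow 2).continuousOn).mul
        (hv'c.pow 2)).aestronglyMeasurable measurableSet_Ioo
    · rw [ae_restrict_iff' measurableSet_Ioo]
      refine ae_of_all _ fun x hx => ?_
      rw [Real.norm_eq_abs, abs_of_nonneg (mul_nonneg (h1x x hx).le (sq_nonneg _))]
      exact hv'w x hx
  have hsqv : IntegrableOn (fun x => v x ^ 2) (Ioo (-1:ℝ) 1) :=
    (((hvc.pow 2).continuousOn).integrableOn_compact isCompact_Icc).mono_set
      Ioo_subset_Icc_self
  refine ⟨φ, hφ, v, v', ⟨hsqv, hlocAC, hv'ii, hwsq⟩, ?_⟩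
  set Dk := fun k => dist (UB (φ k)) Ulim with hDk
  set Ek := fun k => dist (FB (φ k)) Flim with hEk
  have hπint : ∫ x in Ioo (-1:ℝ) 1, (1 / Real.sqrt (1 - x^2)) = π := by
    rw [setIntegral_congr_set Ioo_ae_eq_Ioc,
      ← intervalIntegral.integral_of_le (by norm_num : (-1:ℝ) ≤ 1),
      arc_eval (le_refl (-1:ℝ)) (by norm_num) (le_refl 1), Real.arcsin_one, Real.arcsin_neg_one]
    ring
  have hukc : ∀ k, ContinuousOn (u (φ k)) (Ioo (-1:ℝ) 1) := fun k =>
    ContinuousOn.congr (G (φ k)).Uc_cont.continuousOn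
      (fun x hx => ((G (φ k)).Uc_eq x hx).symm)
  have hu'kc : ∀ k, ContinuousOn (u' (φ k)) (Ioo (-1:ℝ) 1) := fun k =>
    ContinuousOn.congr ((G (φ k)).Fc_cont.continuousOn.div (by fun_prop)
      (fun x hx => ne_of_gt (h1x x hx))) ((G (φ k)).u'_eq)
  have hbound1 : ∀ k, ∫ x in Ioo (-1:ℝ) 1, (u (φ k) x - v x)^2 ≤ 2 * Dk k ^ 2 := by
    intro k
    have hpt : ∀ x ∈ Ioo (-1:ℝ) 1, (u (φ k) x - v x)^2 ≤ Dk k ^2 := by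
      intro x hx
      have hxI := Ioo_subset_Icc_self hx
      have hd := BoundedContinuousFunction.dist_coe_le_dist (f := UB (φ k)) (g := Ulim) ⟨x, hxI⟩
      rw [Real.dist_eq] at hd
      rw [hueq (φ k) x hx, hveq x hxI]
      calc (UB (φ k) ⟨x,hxI⟩ - Ulim ⟨x,hxI⟩)^2
          = |UB (φ k) ⟨x,hxI⟩ - Ulim ⟨x,hxI⟩|^2 := (sq_abs _).symm
        _ ≤ Dk k ^2 := by nlinarith [abs_nonneg (UB (φ k) ⟨x,hxI⟩ - Ulim ⟨x,hxI⟩)]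
    have hint : IntegrableOn (fun x => (u (φ k) x - v x)^2) (Ioo (-1:ℝ) 1) := by
      apply Integrable.mono' (g := fun _ => Dk k ^2)
        (integrableOn_const measure_Ioo_lt_top.ne)
      · exact (((hukc k).sub hvc.continuousOn).pow 2).aestronglyMeasurable measurableSet_Ioo
      · rw [ae_restrict_iff' measurableSet_Ioo]
        exact ae_of_all _ fun x hx => by
          rw [Real.norm_eq_abs, abs_of_nonneg (sq_nonneg _)]; exact hpt x hx
    calc ∫ x in Ioo (-1:ℝ) 1, (u (φ k) x - v x)^2
        ≤ ∫ _x in Ioo (-1:ℝ) 1, Dk k ^2 := setIntegral_mono_on hint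
          (integrableOn_const measure_Ioo_lt_top.ne) measurableSet_Ioo hpt
      _ = 2 * Dk k ^2 := by
          rw [setIntegral_const, measureReal_def, Real.volume_Ioo, smul_eq_mul,
            show (1:ℝ) - -1 = 2 by norm_num, ENNReal.toReal_ofReal (by norm_num : (0:ℝ) ≤ 2)]
  have hbound2 : ∀ k, ∫ x in Ioo (-1:ℝ) 1, (1 - x^2) * (u' (φ k) x - v' x)^2
      ≤ 2 * Real.sqrt b * Ek k * π := by
    intro k
    have hEnn : 0 ≤ Ek k := dist_nonneg
    have hpt : ∀ x ∈ Ioo (-1:ℝ) 1, (1 - x^2) * (u' (φ k) x - v' x)^2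
        ≤ 2 * Real.sqrt b * Ek k * (1 / Real.sqrt (1 - x^2)) := by
      intro x hx
      have hxI := Ioo_subset_Icc_self hx
      have h1 := h1x x hx
      have hs : 0 < Real.sqrt (1 - x^2) := Real.sqrt_pos.2 h1
      have hss : Real.sqrt (1 - x^2) * Real.sqrt (1 - x^2) = 1 - x^2 := Real.mul_self_sqrt h1.le
      have hd := hFldist k x hxI
      have hFk := hFcabs (φ k) x hxI
      have hFlb := hFlabs x hxI
      have hdsq : (Fc (Au (φ k)) x - Fl x)^2 ≤ Ek k * (2 * Real.sqrt b * Real.sqrt (1 - x^2)) := by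
        have h3 : |Fc (Au (φ k)) x - Fl x| ≤ |Fc (Au (φ k)) x| + |Fl x| := abs_sub _ _
        nlinarith [abs_nonneg (Fc (Au (φ k)) x - Fl x), sq_abs (Fc (Au (φ k)) x - Fl x), hs.le]
      have heq : (1 - x^2) * (u' (φ k) x - v' x)^2 = (Fc (Au (φ k)) x - Fl x)^2 / (1 - x^2) := by
        rw [(G (φ k)).u'_eq x hx]
        simp only [hv'def]
        field_simp
      rw [heq, div_le_iff₀ h1]
      have hrhs : 2 * Real.sqrt b * Ek k * (1 / Real.sqrt (1 - x^2)) * (1 - x^2)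
          = Ek k * (2 * Real.sqrt b * Real.sqrt (1 - x^2)) := by
        field_simp
        nlinarith [hss]
      rw [hrhs]; exact hdsq
    have hint : IntegrableOn (fun x => (1 - x^2) * (u' (φ k) x - v' x)^2) (Ioo (-1:ℝ) 1) := by
      apply Integrable.mono' (g := fun _ => 4*b)
        (integrableOn_const measure_Ioo_lt_top.ne)
      · exact ((continuousOn_const.sub (continuous_pow 2).continuousOn).mul
          (((hu'kc k).sub hv'c).pow 2)).aestronglyMeasurable measurableSet_Ioo
      · rw [ae_restrict_iff' measurableSet_Ioo]
        refine ae_of_all _ fun x hx => ?_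
        rw [Real.norm_eq_abs, abs_of_nonneg (mul_nonneg (h1x x hx).le (sq_nonneg _))]
        nlinarith [hu'w (φ k) x hx, hv'w x hx, h1x x hx,
          mul_nonneg (h1x x hx).le (sq_nonneg (u' (φ k) x + v' x))]
    calc ∫ x in Ioo (-1:ℝ) 1, (1 - x^2) * (u' (φ k) x - v' x)^2
        ≤ ∫ x in Ioo (-1:ℝ) 1, 2 * Real.sqrt b * Ek k * (1 / Real.sqrt (1 - x^2)) :=
          setIntegral_mono_on hint
            ((arc_int.mono_set Ioo_subset_Ioc_self).const_mul _) measurableSet_Ioo hpt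
      _ = 2 * Real.sqrt b * Ek k * π := by rw [integral_const_mul, hπint]
  apply squeeze_zero (g := fun k => 2 * Dk k ^ 2 + 2 * Real.sqrt b * Ek k * π)
  · intro k
    exact add_nonneg (setIntegral_nonneg measurableSet_Ioo fun x _ => sq_nonneg _)
      (setIntegral_nonneg measurableSet_Ioo fun x hx =>
        mul_nonneg (by nlinarith [hx.1, hx.2] : (0:ℝ) ≤ 1 - x^2) (sq_nonneg _))
  · intro k
    exact add_le_add (hbound1 k) (hbound2 k)
  · have t1 : Tendsto (fun k => 2 * Dk k ^ 2) atTop (𝓝 (2 * 0 ^ 2)) :=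
      (hconvU.pow 2).const_mul 2
    have t2 : Tendsto (fun k => 2 * Real.sqrt b * Ek k * π) atTop
        (𝓝 (2 * Real.sqrt b * 0 * π)) := (hconvF.const_mul _).mul_const _
    have t3 := t1.add t2
    norm_num at t3
    exact t3
end
end

section
/- (Interpolation inequality between L², V and D(A)) There exists a constant C>0 such that for every u∈D(A) one has ‖u‖_V ≤ C·‖u‖_{L²(−1,1)}^{1/2}·‖u‖_{D(A)}^{1/2}, i.e. (∫_{−1}^{1} u² dx + ∫_{−1}^{1} (1−x²)u′(x)² dx)^{1/2} ≤ C·(∫_{−1}^{1} u² dx)^{1/4}·(∫_{−1}^{1} u² dx + ∫_{−1}^{1} (Au)(x)² dx)^{1/4}. -/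
open MeasureTheory Set Filter

noncomputable section

namespace InterpAux

lemma exists_small_tail {f : ℝ → ℝ} {s e : ℝ} (hse : s < e)
    (hf : IntegrableOn (fun x => f x ^ 2) (Ioo s e)) {δ : ℝ} (hδ : 0 < δ) :
    ∃ b ∈ Ioo s e, (e - b) * f b ^ 2 < δ := by
  by_contra hcon
  push_neg at hcon
  have hes : (0:ℝ) < e - s := by linarith
  set t : ℕ → Set ℝ := fun n => Ioo (e - (e - s) / (n + 2)) e with ht
  have hmem : ∀ n : ℕ, e - (e - s) / (n + 2) ∈ Ioo s e := by
    intro n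
    constructor
    · have h1 : (e - s) / (n + 2) < e - s := by
        apply div_lt_self hes
        have : (0:ℝ) ≤ (n:ℝ) := Nat.cast_nonneg n
        linarith
      linarith
    · have h0 : (0:ℝ) < (n:ℝ) + 2 := by positivity
      have : 0 < (e - s) / (n + 2) := div_pos hes h0
      linarith
  have hanti : Antitone t := by
    intro m n hmn
    apply Ioo_subset_Ioo_left
    have h3 : ((m:ℝ) + 2) ≤ (n:ℝ) + 2 := by
      have : (m:ℝ) ≤ (n:ℝ) := Nat.cast_le.2 hmn
      linarith
    have : (e - s) / ((n:ℝ) + 2) ≤ (e - s) / ((m:ℝ) + 2) := by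
      apply div_le_div_of_nonneg_left hes.le (by positivity) h3
    linarith
  have hInter : ⋂ n, t n = ∅ := by
    ext x
    simp only [mem_iInter, mem_empty_iff_false, iff_false, not_forall]
    by_cases hx : x ∈ Ioo s e
    swap
    · exact ⟨0, fun hmem0 => hx ⟨(hmem 0).1.trans hmem0.1, hmem0.2⟩⟩
    · obtain ⟨n, hn⟩ := exists_nat_gt ((e - s) / (e - x))
      refine ⟨n, fun hc => ?_⟩
      have hex : 0 < e - x := by have := hx.2; linarith
      have h1 : e - (e - s) / (n + 2) < x := hc.1
      have h2 : (e - s) / (n + 2) > e - x := by linarith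
      have h3 : (e - s) / (e - x) > (n:ℝ) + 2 := by
        rw [gt_iff_lt, lt_div_iff₀ hex]
        calc ((n:ℝ) + 2) * (e - x) < ((n:ℝ)+2) * ((e - s)/(n+2)) := by
              apply mul_lt_mul_of_pos_left h2 (by positivity)
          _ = e - s := by field_simp
      linarith
  -- each tail integral is at least δ
  have htail : ∀ n : ℕ, δ ≤ ∫ x in t n, f x ^ 2 := by
    intro n
    set b := e - (e - s) / (n + 2) with hb
    have hbm := hmem n
    have hbe : e - b = (e - s) / (n + 2) := by rw [hb]; ring
    have heb : 0 < e - b := by rw [hbe]; positivity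
    have hmeas : volume (t n) = ENNReal.ofReal (e - b) := by
      simp [ht, Real.volume_Ioo, hbe]
    have hint : IntegrableOn (fun x => f x ^ 2) (t n) :=
      hf.mono_set (Ioo_subset_Ioo_left hbm.1.le)
    have hconst : ∀ x ∈ t n, δ / (e - b) ≤ f x ^ 2 := by
      intro x hx
      have hxe : x < e := hx.2
      have hbx : b < x := hx.1
      have hxIoo : x ∈ Ioo s e := ⟨hbm.1.trans hbx, hxe⟩
      have h1 : δ ≤ (e - x) * f x ^ 2 := hcon x hxIoo
      have hex : 0 < e - x := by linarith
      rw [div_le_iff₀ heb]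
      calc δ ≤ (e - x) * f x ^ 2 := h1
        _ ≤ (e - b) * f x ^ 2 := by nlinarith [sq_nonneg (f x)]
        _ = f x ^ 2 * (e - b) := by ring
    have := setIntegral_ge_of_const_le (μ := volume) (s := t n) measurableSet_Ioo
      (by rw [hmeas]; exact ENNReal.ofReal_ne_top) hconst hint
    rw [measureReal_def, hmeas, ENNReal.toReal_ofReal heb.le, smul_eq_mul, mul_comm] at this
    calc δ = δ / (e - b) * (e - b) := by field_simp
      _ ≤ ∫ x in t n, f x ^ 2 := this
  have htends := tendsto_setIntegral_of_antitone (μ := volume)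
    (f := fun x => f x ^ 2) (fun n => measurableSet_Ioo) hanti
    ⟨0, hf.mono_set (Ioo_subset_Ioo_left (hmem 0).1.le)⟩
  rw [hInter] at htends
  simp only [Measure.restrict_empty, integral_zero_measure] at htends
  have : δ ≤ 0 := le_of_tendsto_of_tendsto' tendsto_const_nhds htends htail
  linarith

lemma exists_small_head {f : ℝ → ℝ} {s e : ℝ} (hse : s < e)
    (hf : IntegrableOn (fun x => f x ^ 2) (Ioo s e)) {δ : ℝ} (hδ : 0 < δ) :
    ∃ a ∈ Ioo s e, (a - s) * f a ^ 2 < δ := by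
  have hneg : IntegrableOn (fun x => f (-x) ^ 2) (Ioo (-e) (-s)) := by
    have := ((Measure.measurePreserving_neg (volume : Measure ℝ)).integrableOn_comp_preimage
      (Homeomorph.neg ℝ).measurableEmbedding (f := fun x => f x ^ 2) (s := Ioo s e)).2 hf
    simpa [Function.comp_def, neg_preimage, neg_Ioo] using this
  obtain ⟨b, hb, hbs⟩ := exists_small_tail (by linarith : -e < -s) hneg hδ
  refine ⟨-b, ⟨by linarith [hb.2], by linarith [hb.1]⟩, ?_⟩
  have : -s - b = -b - s := by ring
  simpa [this] using hbs


variable {u u' Au : ℝ → ℝ}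

lemma contF (h : MemDA u u' Au) :
    ContinuousOn (fun x => ∫ t in (-1:ℝ)..x, Au t) (Icc (-1:ℝ) 1) := by
  have := intervalIntegral.continuousOn_primitive_interval' (a := (-1:ℝ))
    h.Au_intble (by simp [uIcc_of_le (by norm_num : (-1:ℝ) ≤ 1)])
  simpa [uIcc_of_le (by norm_num : (-1:ℝ) ≤ 1)] using this

lemma contu_Icc (h : MemDA u u' Au) {c d : ℝ} (hc : c ∈ Ioo (-1:ℝ) 1) (hd : d ∈ Ioo (-1:ℝ) 1)
    (hcd : c ≤ d) : ContinuousOn u (Icc c d) := by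
  have hprim : ContinuousOn (fun x => u c + ∫ t in c..x, u' t) (Icc c d) := by
    apply ContinuousOn.add continuousOn_const
    have := intervalIntegral.continuousOn_primitive_interval' (a := c) (b₁ := c) (b₂ := d)
      (h.deriv_intble c d hc hd) (by rw [uIcc_of_le hcd]; exact left_mem_Icc.2 hcd)
    simpa [uIcc_of_le hcd] using this
  apply hprim.congr
  intro x hx
  have hxI : x ∈ Ioo (-1:ℝ) 1 := ⟨lt_of_lt_of_le hc.1 hx.1, lt_of_le_of_lt hx.2 hd.2⟩
  have := h.locAC c x hc hxI
  show u x = u c + ∫ t in c..x, u' t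
  linarith [this]

lemma ibp (h : MemDA u u' Au) {a b : ℝ} (ha : -1 < a) (hab : a ≤ b) (hb : b < 1) :
    ∫ x in Ioc a b, u' x * (∫ t in (-1:ℝ)..x, Au t)
      = u b * (∫ t in (-1:ℝ)..b, Au t) - u a * (∫ t in (-1:ℝ)..a, Au t)
        - ∫ x in Ioc a b, u x * Au x := by
  set F : ℝ → ℝ := fun x => ∫ t in (-1:ℝ)..x, Au t with hF
  have haI : a ∈ Ioo (-1:ℝ) 1 := ⟨ha, lt_of_le_of_lt hab hb⟩
  have hbI : b ∈ Ioo (-1:ℝ) 1 := ⟨lt_of_lt_of_le ha hab, hb⟩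
  have hIccsub : Icc a b ⊆ Icc (-1:ℝ) 1 := Icc_subset_Icc ha.le hb.le
  have hAuiv : ∀ c d : ℝ, c ∈ Icc (-1:ℝ) 1 → d ∈ Icc (-1:ℝ) 1 →
      IntervalIntegrable Au volume c d := by
    intro c d hc hd
    apply h.Au_intble.mono_set
    rw [uIcc_of_le (by norm_num : (-1:ℝ) ≤ 1)]
    exact uIcc_subset_Icc hc hd
  have haIcc : a ∈ Icc (-1:ℝ) 1 := ⟨ha.le, (hab.trans hb.le)⟩
  have hbIcc : b ∈ Icc (-1:ℝ) 1 := ⟨ha.le.trans hab, hb.le⟩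
  -- basic integrabilities
  have hu'ab : IntegrableOn u' (Ioc a b) :=
    (intervalIntegrable_iff_integrableOn_Ioc_of_le hab).1 (h.deriv_intble a b haI hbI)
  have hAuab : IntegrableOn Au (Ioc a b) :=
    (intervalIntegrable_iff_integrableOn_Ioc_of_le hab).1 (hAuiv a b haIcc hbIcc)
  -- F increments
  have Fadd : ∀ x : ℝ, a ≤ x → x ≤ 1 → F x - F a = ∫ t in a..x, Au t := by
    intro x hax hx1
    have hxIcc : x ∈ Icc (-1:ℝ) 1 := ⟨ha.le.trans hax, hx1⟩
    have := intervalIntegral.integral_add_adjacent_intervals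
      (hAuiv (-1) a (left_mem_Icc.2 (by norm_num)) haIcc) (hAuiv a x haIcc hxIcc)
    rw [hF]
    simp only [this.symm]
    ring
  have FaddIoc : ∀ x : ℝ, a ≤ x → x ≤ 1 → F x - F a = ∫ t in Ioc a x, Au t := by
    intro x hax hx1
    rw [Fadd x hax hx1, intervalIntegral.integral_of_le hax]
  -- Fubini setup
  set S : Set (ℝ × ℝ) := {p | p.2 ≤ p.1} with hS
  have hSmeas : MeasurableSet S := measurableSet_le measurable_snd measurable_fst
  set g : ℝ × ℝ → ℝ := S.indicator (fun p => u' p.1 * Au p.2) with hg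
  set μab := volume.restrict (Ioc a b) with hμab
  have hgint : Integrable g (μab.prod μab) :=
    (Integrable.mul_prod hu'ab hAuab).indicator hSmeas
  have hswap : (∫ x, (∫ t, g (x, t) ∂μab) ∂μab) = ∫ t, (∫ x, g (x, t) ∂μab) ∂μab :=
    integral_integral_swap (f := fun x t => g (x, t)) hgint
  -- LHS
  have hL : (∫ x, (∫ t, g (x, t) ∂μab) ∂μab)
      = ∫ x in Ioc a b, u' x * (F x - F a) := by
    apply setIntegral_congr_fun measurableSet_Ioc
    intro x hx
    have inner1 : (fun t => g (x, t)) = (Iic x).indicator (fun t => u' x * Au t) := by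
      funext t
      by_cases h' : t ≤ x
      · simp [hg, indicator, hS, h']
      · simp [hg, indicator, hS, h']
    show (∫ t, g (x, t) ∂μab) = u' x * (F x - F a)
    rw [hμab, inner1, setIntegral_indicator measurableSet_Iic]
    have hseteq : Ioc a b ∩ Iic x = Ioc a x := by
      rw [Ioc_inter_Iic, min_eq_right hx.2]
    rw [hseteq, integral_const_mul, ← FaddIoc x hx.1.le (hx.2.trans hb.le)]
  -- RHS
  have hR : (∫ t, (∫ x, g (x, t) ∂μab) ∂μab)
      = ∫ t in Ioc a b, (u b - u t) * Au t := by
    apply setIntegral_congr_fun measurableSet_Ioc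
    intro t ht
    have htI : t ∈ Ioo (-1:ℝ) 1 := ⟨ha.trans ht.1, lt_of_le_of_lt ht.2 hb⟩
    have inner2 : (fun x => g (x, t)) = (Ici t).indicator (fun x => u' x * Au t) := by
      funext x
      by_cases h' : t ≤ x
      · simp [hg, indicator, hS, h']
      · simp [hg, indicator, hS, h']
    show (∫ x, g (x, t) ∂μab) = (u b - u t) * Au t
    rw [hμab, inner2, setIntegral_indicator measurableSet_Ici]
    have hseteq : Ioc a b ∩ Ici t = Icc t b := by
      ext x
      simp only [mem_inter_iff, mem_Ioc, mem_Ici, mem_Icc]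
      constructor
      · rintro ⟨⟨_, hxb⟩, htx⟩; exact ⟨htx, hxb⟩
      · rintro ⟨htx, hxb⟩; exact ⟨⟨lt_of_lt_of_le ht.1 htx, hxb⟩, htx⟩
    rw [hseteq, integral_Icc_eq_integral_Ioc, integral_mul_const,
      ← intervalIntegral.integral_of_le ht.2, ← h.locAC t b htI hbI]
  -- integrability of products on Ioc a b
  have hFc : ContinuousOn F (Icc a b) := (contF h).mono hIccsub
  have hu'Icc : IntegrableOn u' (Icc a b) := (integrableOn_Icc_iff_integrableOn_Ioc (by simp)).2 hu'ab
  have hAuIcc : IntegrableOn Au (Icc a b) := (integrableOn_Icc_iff_integrableOn_Ioc (by simp)).2 hAuab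
  have hu'F : IntegrableOn (fun x => u' x * F x) (Ioc a b) := by
    have := (hu'Icc.continuousOn_mul hFc isCompact_Icc).mono_set Ioc_subset_Icc_self
    simpa [mul_comm] using this
  have hIccIoo : Icc a b ⊆ Ioo (-1:ℝ) 1 := Icc_subset_Ioo ha hb
  have hucont : ContinuousOn u (Icc a b) := contu_Icc h haI hbI hab
  have huAu : IntegrableOn (fun x => u x * Au x) (Ioc a b) :=
    (hAuIcc.continuousOn_mul hucont isCompact_Icc).mono_set Ioc_subset_Icc_self
  -- expand both sides
  have hu'int : (∫ x in Ioc a b, u' x) = u b - u a := by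
    rw [← intervalIntegral.integral_of_le hab, ← h.locAC a b haI hbI]
  have hL2 : (∫ x in Ioc a b, u' x * (F x - F a))
      = (∫ x in Ioc a b, u' x * F x) - (u b - u a) * F a := by
    have : (fun x => u' x * (F x - F a)) = fun x => u' x * F x - u' x * F a := by
      funext x; ring
    rw [this, integral_sub hu'F (hu'ab.mul_const (F a)), integral_mul_const, hu'int]
  have hAuint : (∫ t in Ioc a b, Au t) = F b - F a := (FaddIoc b hab hb.le).symm
  have hR2 : (∫ t in Ioc a b, (u b - u t) * Au t)
      = u b * (F b - F a) - ∫ t in Ioc a b, u t * Au t := by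
    have : (fun t => (u b - u t) * Au t) = fun t => u b * Au t - u t * Au t := by
      funext t; ring
    rw [this, integral_sub (hAuab.const_mul (u b)) huAu, integral_const_mul, hAuint]
  have := hswap
  rw [hL, hR, hL2, hR2] at this
  have hgoal : (∫ x in Ioc a b, u' x * F x)
      = u b * F b - u a * F a - ∫ x in Ioc a b, u x * Au x := by linarith
  exact hgoal



lemma cs {f g : ℝ → ℝ} {s : Set ℝ}
    (hf : IntegrableOn (fun x => f x ^ 2) s) (hg : IntegrableOn (fun x => g x ^ 2) s)
    (hfm : AEStronglyMeasurable f (volume.restrict s))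
    (hgm : AEStronglyMeasurable g (volume.restrict s)) :
    ∫ x in s, |f x| * |g x| ≤ Real.sqrt (∫ x in s, f x ^ 2) * Real.sqrt (∫ x in s, g x ^ 2) := by
  have hf2 : MemLp f 2 (volume.restrict s) := (memLp_two_iff_integrable_sq hfm).2 hf
  have hg2 : MemLp g 2 (volume.restrict s) := (memLp_two_iff_integrable_sq hgm).2 hg
  have hpq : Real.HolderConjugate 2 2 := ⟨by norm_num, by norm_num, by norm_num⟩
  have h2 : ENNReal.ofReal (2:ℝ) = 2 := by norm_num
  have := integral_mul_le_Lp_mul_Lq_of_nonneg (μ := volume.restrict s) hpq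
    (f := fun x => |f x|) (g := fun x => |g x|)
    (ae_of_all _ fun x => abs_nonneg _) (ae_of_all _ fun x => abs_nonneg _)
    (by rw [h2]; simpa using hf2.norm) (by rw [h2]; simpa using hg2.norm)
  calc ∫ x in s, |f x| * |g x|
      ≤ (∫ x in s, |f x| ^ (2:ℝ)) ^ ((1:ℝ)/2) * (∫ x in s, |g x| ^ (2:ℝ)) ^ ((1:ℝ)/2) := this
    _ = Real.sqrt (∫ x in s, f x ^ 2) * Real.sqrt (∫ x in s, g x ^ 2) := by
        have e1 : ∀ (F : ℝ → ℝ), (fun x => |F x| ^ (2:ℝ)) = fun x => F x ^ 2 := by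
          intro F; funext x
          rw [show (2:ℝ) = ((2:ℕ):ℝ) by norm_num, Real.rpow_natCast, sq_abs]
        rw [e1 f, e1 g, Real.sqrt_eq_rpow, Real.sqrt_eq_rpow]

lemma Au_iv (h : MemDA u u' Au) {c d : ℝ} (hc : c ∈ Icc (-1:ℝ) 1) (hd : d ∈ Icc (-1:ℝ) 1) :
    IntervalIntegrable Au volume c d := by
  apply h.Au_intble.mono_set
  rw [uIcc_of_le (by norm_num : (-1:ℝ) ≤ 1)]
  exact uIcc_subset_Icc hc hd

lemma Au_sq_seg (h : MemDA u u' Au) {c d : ℝ} (hc : -1 ≤ c) (hd : d ≤ 1) :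
    IntegrableOn (fun x => Au x ^ 2) (Ioc c d) := by
  rcases le_or_gt c d with hcd | hcd
  · rw [integrableOn_Ioc_iff_integrableOn_Ioo]
    exact h.Au_sq_int.mono_set (fun x hx => ⟨lt_of_le_of_lt hc hx.1, lt_of_lt_of_le hx.2 hd⟩)
  · rw [Ioc_eq_empty (not_lt.2 hcd.le)]
    simp [IntegrableOn]

lemma Au_sq_seg_le (h : MemDA u u' Au) {c d : ℝ} (hc : -1 ≤ c) (hd : d ≤ 1) :
    (∫ x in Ioc c d, Au x ^ 2) ≤ ∫ x in Ioo (-1:ℝ) 1, Au x ^ 2 := by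
  apply setIntegral_mono_set h.Au_sq_int (ae_of_all _ fun x => sq_nonneg _)
  rw [ae_le_set]
  apply measure_mono_null (t := {d} ∪ {(-1:ℝ)})
  · intro x hx
    simp only [mem_diff, mem_Ioc, mem_Ioo, not_and, not_lt] at hx
    simp only [mem_union, mem_singleton_iff]
    rcases hx with ⟨⟨hcx, hxd⟩, hnot⟩
    rcases lt_or_ge (-1:ℝ) x with h1 | h1
    · left; exact le_antisymm hxd (by linarith [hnot h1])
    · exact absurd (lt_of_le_of_lt hc hcx) (not_lt.2 h1)
  · exact measure_union_null (measure_singleton d) (measure_singleton (-1))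

lemma L1_seg_bound (h : MemDA u u' Au) {c d : ℝ} (hc : -1 ≤ c) (hcd : c ≤ d) (hd : d ≤ 1) :
    |∫ t in c..d, Au t|
      ≤ Real.sqrt (d - c) * Real.sqrt (∫ x in Ioo (-1:ℝ) 1, Au x ^ 2) := by
  have hAuInt : IntegrableOn Au (Ioc c d) :=
    (intervalIntegrable_iff_integrableOn_Ioc_of_le hcd).1
      (Au_iv h ⟨hc, hcd.trans hd⟩ ⟨hc.trans hcd, hd⟩)
  rw [intervalIntegral.integral_of_le hcd]
  have h1 : |∫ t in Ioc c d, Au t| ≤ ∫ t in Ioc c d, |Au t| := by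
    simpa [Real.norm_eq_abs] using
      norm_integral_le_integral_norm (μ := volume.restrict (Ioc c d)) Au
  have hone : IntegrableOn (fun _ : ℝ => (1:ℝ) ^ 2) (Ioc c d) := by
    exact integrableOn_const measure_Ioc_lt_top.ne
  have h2 : (∫ t in Ioc c d, |(1:ℝ)| * |Au t|)
      ≤ Real.sqrt (∫ x in Ioc c d, (1:ℝ) ^ 2) * Real.sqrt (∫ x in Ioc c d, Au x ^ 2) :=
    cs hone (Au_sq_seg h hc hd) aestronglyMeasurable_const hAuInt.aestronglyMeasurable
  have h3 : (∫ x in Ioc c d, (1:ℝ) ^ 2) = d - c := by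
    simp [Real.volume_Ioc, ENNReal.toReal_ofReal (by linarith : (0:ℝ) ≤ d - c), hcd]
  calc |∫ t in Ioc c d, Au t| ≤ ∫ t in Ioc c d, |Au t| := h1
    _ = ∫ t in Ioc c d, |(1:ℝ)| * |Au t| := by simp
    _ ≤ Real.sqrt (∫ x in Ioc c d, (1:ℝ) ^ 2) * Real.sqrt (∫ x in Ioc c d, Au x ^ 2) := h2
    _ ≤ Real.sqrt (d - c) * Real.sqrt (∫ x in Ioo (-1:ℝ) 1, Au x ^ 2) := by
        rw [h3]
        exact mul_le_mul_of_nonneg_left (Real.sqrt_le_sqrt (Au_sq_seg_le h hc hd))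
          (Real.sqrt_nonneg _)

lemma contu (h : MemDA u u' Au) : ContinuousOn u (Ioo (-1:ℝ) 1) := by
  intro x hx
  obtain ⟨c, hc, hcx⟩ := exists_between hx.1
  obtain ⟨d, hxd, hd⟩ := exists_between hx.2
  have hcI : c ∈ Ioo (-1:ℝ) 1 := ⟨hc, hcx.trans hx.2⟩
  have hdI : d ∈ Ioo (-1:ℝ) 1 := ⟨hx.1.trans hxd, hd⟩
  exact ((contu_Icc h hcI hdI (by linarith)).continuousAt
    (Icc_mem_nhds hcx hxd)).continuousWithinAt

lemma u_aesm (h : MemDA u u' Au) :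
    AEStronglyMeasurable u (volume.restrict (Ioo (-1:ℝ) 1)) :=
  (contu h).aestronglyMeasurable measurableSet_Ioo

lemma Au_aesm (h : MemDA u u' Au) :
    AEStronglyMeasurable Au (volume.restrict (Ioo (-1:ℝ) 1)) :=
  (((intervalIntegrable_iff_integrableOn_Ioc_of_le (by norm_num : (-1:ℝ) ≤ 1)).1
    h.Au_intble).mono_set Ioo_subset_Ioc_self).aestronglyMeasurable

lemma absuAu_int (h : MemDA u u' Au) :
    IntegrableOn (fun x => |u x| * |Au x|) (Ioo (-1:ℝ) 1) := by
  have h1 : MemLp (fun x => |u x|) 2 (volume.restrict (Ioo (-1:ℝ) 1)) := by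
    simpa [Real.norm_eq_abs] using ((memLp_two_iff_integrable_sq (u_aesm h)).2 h.sq_int).norm
  have h2 : MemLp (fun x => |Au x|) 2 (volume.restrict (Ioo (-1:ℝ) 1)) := by
    simpa [Real.norm_eq_abs] using ((memLp_two_iff_integrable_sq (Au_aesm h)).2 h.Au_sq_int).norm
  have h3 : (1:ENNReal)/1 = 1/2 + 1/2 := by rw [ENNReal.add_halves, one_div_one]
  have := MemLp.smul (r := 1) h2 h1
  exact memLp_one_iff_integrable.1 (by simpa [smul_eq_mul, Pi.mul_def] using this)

lemma uAu_bound (h : MemDA u u' Au) {a b : ℝ} (ha : -1 < a) (hb : b < 1) :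
    |∫ x in Ioc a b, u x * Au x|
      ≤ Real.sqrt (∫ x in Ioo (-1:ℝ) 1, u x ^ 2)
          * Real.sqrt (∫ x in Ioo (-1:ℝ) 1, Au x ^ 2) := by
  have hsub : Ioc a b ⊆ Ioo (-1:ℝ) 1 := fun x hx => ⟨ha.trans hx.1, lt_of_le_of_lt hx.2 hb⟩
  calc |∫ x in Ioc a b, u x * Au x| ≤ ∫ x in Ioc a b, |u x| * |Au x| := by
        simpa [Real.norm_eq_abs, abs_mul] using
          norm_integral_le_integral_norm (μ := volume.restrict (Ioc a b))
            (fun x => u x * Au x)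
    _ ≤ ∫ x in Ioo (-1:ℝ) 1, |u x| * |Au x| := by
        apply setIntegral_mono_set (absuAu_int h)
          (ae_of_all _ fun x => mul_nonneg (abs_nonneg _) (abs_nonneg _))
          hsub.eventuallyLE
    _ ≤ _ := cs h.sq_int h.Au_sq_int (u_aesm h) (Au_aesm h)

lemma seg_bound (h : MemDA u u' Au) {a b : ℝ} (ha : -1 < a) (hab : a ≤ b) (hb : b < 1) :
    ∫ x in Ioc a b, (1 - x ^ 2) * u' x ^ 2
      ≤ (|u b| * Real.sqrt (1 - b) + |u a| * Real.sqrt (a + 1)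
          + Real.sqrt (∫ x in Ioo (-1:ℝ) 1, u x ^ 2))
        * Real.sqrt (∫ x in Ioo (-1:ℝ) 1, Au x ^ 2) := by
  set X := ∫ x in Ioo (-1:ℝ) 1, u x ^ 2 with hX
  set Y := ∫ x in Ioo (-1:ℝ) 1, Au x ^ 2 with hY
  set F : ℝ → ℝ := fun x => ∫ t in (-1:ℝ)..x, Au t with hF
  have step1 : ∫ x in Ioc a b, (1 - x ^ 2) * u' x ^ 2 = ∫ x in Ioc a b, u' x * F x := by
    apply setIntegral_congr_fun measurableSet_Ioc
    intro x hx
    have hxI : x ∈ Ioo (-1:ℝ) 1 := ⟨ha.trans hx.1, lt_of_le_of_lt hx.2 hb⟩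
    have hf := h.flux x hxI
    show (1 - x ^ 2) * u' x ^ 2 = u' x * F x
    have : (1 - x ^ 2) * u' x ^ 2 = ((1 - x ^ 2) * u' x) * u' x := by ring
    rw [this, hf]; simp [hF]; ring
  have step2 := ibp h ha hab hb
  -- endpoint bounds on F
  have hFb : |F b| ≤ Real.sqrt (1 - b) * Real.sqrt Y := by
    have hadd := intervalIntegral.integral_add_adjacent_intervals
      (Au_iv h (left_mem_Icc.2 (by norm_num)) ⟨by linarith, hb.le⟩)
      (Au_iv h ⟨by linarith, hb.le⟩ (right_mem_Icc.2 (by norm_num)))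
    rw [h.flux_one] at hadd
    have hFbe : F b = -(∫ t in b..(1:ℝ), Au t) := by rw [hF]; simp; linarith [hadd]
    rw [hFbe, abs_neg]
    exact L1_seg_bound h (by linarith) hb.le le_rfl
  have hFa : |F a| ≤ Real.sqrt (a + 1) * Real.sqrt Y := by
    have := L1_seg_bound h (le_refl (-1:ℝ)) (by linarith : (-1:ℝ) ≤ a) (by linarith : a ≤ 1)
    have he : a - (-1) = a + 1 := by ring
    rw [he] at this
    exact this
  -- combine
  have h1 : u b * F b ≤ |u b| * |F b| := (le_abs_self _).trans (abs_mul _ _).le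
  have h2 : -(u a * F a) ≤ |u a| * |F a| := (neg_le_abs _).trans (abs_mul _ _).le
  have h3 : -(∫ x in Ioc a b, u x * Au x) ≤ Real.sqrt X * Real.sqrt Y := by
    have := uAu_bound h ha hb
    rw [hX, hY]
    calc -(∫ x in Ioc a b, u x * Au x) ≤ |∫ x in Ioc a b, u x * Au x| := neg_le_abs _
      _ ≤ _ := this
  have h4 : |u b| * |F b| ≤ |u b| * (Real.sqrt (1 - b) * Real.sqrt Y) :=
    mul_le_mul_of_nonneg_left hFb (abs_nonneg _)
  have h5 : |u a| * |F a| ≤ |u a| * (Real.sqrt (a + 1) * Real.sqrt Y) :=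
    mul_le_mul_of_nonneg_left hFa (abs_nonneg _)
  have hexp : (|u b| * Real.sqrt (1 - b) + |u a| * Real.sqrt (a + 1) + Real.sqrt X)
      * Real.sqrt Y
      = |u b| * (Real.sqrt (1 - b) * Real.sqrt Y)
        + |u a| * (Real.sqrt (a + 1) * Real.sqrt Y) + Real.sqrt X * Real.sqrt Y := by ring
  rw [step1, step2, hexp]
  linarith

lemma G_le (h : MemDA u u' Au)
    (hint : IntegrableOn (fun x => (1 - x ^ 2) * u' x ^ 2) (Ioo (-1:ℝ) 1)) :
    (∫ x in Ioo (-1:ℝ) 1, (1 - x ^ 2) * u' x ^ 2)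
      ≤ Real.sqrt (∫ x in Ioo (-1:ℝ) 1, u x ^ 2)
          * Real.sqrt (∫ x in Ioo (-1:ℝ) 1, Au x ^ 2) := by
  set X := ∫ x in Ioo (-1:ℝ) 1, u x ^ 2 with hX
  set Y := ∫ x in Ioo (-1:ℝ) 1, Au x ^ 2 with hY
  set f : ℝ → ℝ := fun x => (1 - x ^ 2) * u' x ^ 2 with hf
  have hSnn : 0 ≤ Real.sqrt Y := Real.sqrt_nonneg _
  apply le_of_forall_pos_le_add
  intro ε hε
  set s : ℕ → Set ℝ := fun n => Ioo (-1 + 1/((n:ℝ)+2)) (1 - 1/((n:ℝ)+2)) with hs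
  have hsm : ∀ n, MeasurableSet (s n) := fun n => measurableSet_Ioo
  have hmono : Monotone s := by
    intro n m hnm
    have h1 : 1/((m:ℝ)+2) ≤ 1/((n:ℝ)+2) := by
      apply div_le_div_of_nonneg_left (by norm_num) (by positivity)
      have : (n:ℝ) ≤ (m:ℝ) := Nat.cast_le.2 hnm
      linarith
    exact Ioo_subset_Ioo (by linarith) (by linarith)
  have hUnion : ⋃ n, s n = Ioo (-1:ℝ) 1 := by
    apply Subset.antisymm
    · apply iUnion_subset
      intro n
      have h1 : 0 < 1/((n:ℝ)+2) := by positivity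
      exact Ioo_subset_Ioo (by linarith) (by linarith)
    · intro x hx
      have hpos : 0 < min (x + 1) (1 - x) := by
        rcases hx with ⟨h1, h2⟩
        apply lt_min <;> linarith
      obtain ⟨n, hn⟩ := exists_nat_one_div_lt hpos
      have h1 : 1/((n:ℝ)+2) ≤ 1/((n:ℝ)+1) := by
        apply div_le_div_of_nonneg_left (by norm_num) (by positivity) (by linarith)
      have h2 : 1/((n:ℝ)+1) < min (x + 1) (1 - x) := hn
      have h3 := (lt_min_iff.1 h2).1
      have h4 := (lt_min_iff.1 h2).2
      refine mem_iUnion.2 ⟨n, ⟨?_, ?_⟩⟩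
      · show -1 + 1/((n:ℝ)+2) < x; linarith
      · show x < 1 - 1/((n:ℝ)+2); linarith
  have htends := tendsto_setIntegral_of_monotone hsm hmono (by rw [hUnion]; exact hint)
  rw [hUnion] at htends
  apply le_of_tendsto htends
  filter_upwards with n
  -- fixed n
  set c := -1 + 1/((n:ℝ)+2) with hc
  set d := 1 - 1/((n:ℝ)+2) with hd
  have hfrac : 0 < 1/((n:ℝ)+2) := by positivity
  have hfrac2 : 1/((n:ℝ)+2) ≤ 1/2 := by
    apply div_le_div_of_nonneg_left (by norm_num) (by norm_num) (by
      have : (0:ℝ) ≤ (n:ℝ) := Nat.cast_nonneg n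
      linarith)
  have hcd : c < d := by rw [hc, hd]; linarith
  set δ := (ε / (2 * (Real.sqrt Y + 1))) ^ 2 with hδ
  have hδpos : 0 < δ := by positivity
  obtain ⟨b, hbI, hbδ⟩ := exists_small_tail (show d < 1 by rw [hd]; linarith)
    (h.sq_int.mono_set (Ioo_subset_Ioo (by rw [hd]; linarith) le_rfl)) hδpos
  obtain ⟨a, haI, haδ⟩ := exists_small_head (show (-1:ℝ) < c by rw [hc]; linarith)
    (h.sq_int.mono_set (Ioo_subset_Ioo le_rfl (by rw [hc]; linarith))) hδpos
  have ha : -1 < a := haI.1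
  have hb : b < 1 := hbI.2
  have hab : a ≤ b := by linarith [haI.2, hbI.1, hcd]
  have hmon : (∫ x in s n, f x) ≤ ∫ x in Ioc a b, f x := by
    apply setIntegral_mono_set
      (hint.mono_set (fun x hx => ⟨ha.trans hx.1, lt_of_le_of_lt hx.2 hb⟩))
    · rw [EventuallyLE, ae_restrict_iff' measurableSet_Ioc]
      apply ae_of_all
      intro x hx
      show (0:ℝ) ≤ f x
      have h1 : -1 < x := ha.trans hx.1
      have h2 : x < 1 := lt_of_le_of_lt hx.2 hb
      apply mul_nonneg (by nlinarith) (sq_nonneg _)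
    · have hsub : s n ⊆ Ioc a b := fun x hx => ⟨haI.2.trans hx.1, (hx.2.trans hbI.1).le⟩
      exact hsub.eventuallyLE
  have hseg := seg_bound h ha hab hb
  set e2 := ε / (2 * (Real.sqrt Y + 1)) with he2
  have he2nn : 0 ≤ e2 := by positivity
  have hb1 : |u b| * Real.sqrt (1 - b) ≤ e2 := by
    have h1 : |u b| * Real.sqrt (1 - b) = Real.sqrt ((1 - b) * u b ^ 2) := by
      rw [mul_comm (1-b), Real.sqrt_mul (sq_nonneg _), Real.sqrt_sq_eq_abs]
    rw [h1, ← Real.sqrt_sq he2nn]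
    exact Real.sqrt_le_sqrt hbδ.le
  have ha1 : |u a| * Real.sqrt (a + 1) ≤ e2 := by
    have h1 : |u a| * Real.sqrt (a + 1) = Real.sqrt ((a - (-1)) * u a ^ 2) := by
      rw [show a - (-1) = a + 1 by ring, mul_comm (a+1), Real.sqrt_mul (sq_nonneg _),
        Real.sqrt_sq_eq_abs]
    rw [h1, ← Real.sqrt_sq he2nn]
    exact Real.sqrt_le_sqrt haδ.le
  have h6 : (|u b| * Real.sqrt (1 - b) + |u a| * Real.sqrt (a + 1)) * Real.sqrt Y
      ≤ (e2 + e2) * Real.sqrt Y :=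
    mul_le_mul_of_nonneg_right (add_le_add hb1 ha1) hSnn
  have h7 : (e2 + e2) * Real.sqrt Y ≤ ε := by
    have hne : (2 * (Real.sqrt Y + 1)) ≠ 0 := by positivity
    have hid : (e2 + e2) * Real.sqrt Y = ε * (Real.sqrt Y / (Real.sqrt Y + 1)) := by
      rw [he2]; field_simp; ring
    rw [hid]
    calc ε * (Real.sqrt Y / (Real.sqrt Y + 1)) ≤ ε * 1 := by
          apply mul_le_mul_of_nonneg_left _ hε.le
          rw [div_le_one (by positivity)]
          linarith
      _ = ε := mul_one ε
  have hexp : (|u b| * Real.sqrt (1 - b) + |u a| * Real.sqrt (a + 1) + Real.sqrt X)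
      * Real.sqrt Y
      = (|u b| * Real.sqrt (1 - b) + |u a| * Real.sqrt (a + 1)) * Real.sqrt Y
        + Real.sqrt X * Real.sqrt Y := by ring
  calc (∫ x in s n, f x) ≤ ∫ x in Ioc a b, f x := hmon
    _ ≤ (|u b| * Real.sqrt (1 - b) + |u a| * Real.sqrt (a + 1) + Real.sqrt X)
          * Real.sqrt Y := hseg
    _ = (|u b| * Real.sqrt (1 - b) + |u a| * Real.sqrt (a + 1)) * Real.sqrt Y
          + Real.sqrt X * Real.sqrt Y := hexp
    _ ≤ ε + Real.sqrt X * Real.sqrt Y := by linarith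
    _ = Real.sqrt X * Real.sqrt Y + ε := by ring

end InterpAux

/-- Interpolation inequality between `L²`, `V` and `D(A)`:
`‖u‖_V ≤ C ‖u‖_{L²}^{1/2} ‖u‖_{D(A)}^{1/2}` for every `u ∈ D(A)`. -/


theorem interpolation_L2_V_DA :
    ∃ C : ℝ, 0 < C ∧ ∀ u u' Au : ℝ → ℝ, MemDA u u' Au →
      Real.sqrt ((∫ x in Ioo (-1:ℝ) 1, u x ^ 2)
          + ∫ x in Ioo (-1:ℝ) 1, (1 - x ^ 2) * u' x ^ 2)
        ≤ C * (∫ x in Ioo (-1:ℝ) 1, u x ^ 2) ^ ((1:ℝ)/4)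
            * ((∫ x in Ioo (-1:ℝ) 1, u x ^ 2)
                + ∫ x in Ioo (-1:ℝ) 1, Au x ^ 2) ^ ((1:ℝ)/4) := by
  refine ⟨2, by norm_num, ?_⟩
  intro u u' Au h
  set X := ∫ x in Ioo (-1:ℝ) 1, u x ^ 2 with hX
  set Y := ∫ x in Ioo (-1:ℝ) 1, Au x ^ 2 with hY
  set G := ∫ x in Ioo (-1:ℝ) 1, (1 - x ^ 2) * u' x ^ 2 with hG
  have hXnn : 0 ≤ X := setIntegral_nonneg measurableSet_Ioo (fun x _ => sq_nonneg _)
  have hYnn : 0 ≤ Y := setIntegral_nonneg measurableSet_Ioo (fun x _ => sq_nonneg _)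
  have hGle : G ≤ Real.sqrt X * Real.sqrt Y := by
    by_cases hint : IntegrableOn (fun x => (1 - x ^ 2) * u' x ^ 2) (Ioo (-1:ℝ) 1)
    · exact InterpAux.G_le h hint
    · rw [hG, integral_undef hint]
      exact mul_nonneg (Real.sqrt_nonneg _) (Real.sqrt_nonneg _)
  have hXYnn : 0 ≤ X + Y := by linarith
  have h1 : X + G ≤ 2 * (Real.sqrt X * Real.sqrt (X + Y)) := by
    have hXY : Real.sqrt Y ≤ Real.sqrt (X + Y) := Real.sqrt_le_sqrt (by linarith)
    have hXX : Real.sqrt X ≤ Real.sqrt (X + Y) := Real.sqrt_le_sqrt (by linarith)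
    have t1 : X ≤ Real.sqrt X * Real.sqrt (X + Y) := by
      calc X = Real.sqrt X * Real.sqrt X := (Real.mul_self_sqrt hXnn).symm
        _ ≤ Real.sqrt X * Real.sqrt (X + Y) :=
            mul_le_mul_of_nonneg_left hXX (Real.sqrt_nonneg X)
    have t2 : G ≤ Real.sqrt X * Real.sqrt (X + Y) :=
      hGle.trans (mul_le_mul_of_nonneg_left hXY (Real.sqrt_nonneg X))
    linarith
  have q : ∀ Z : ℝ, 0 ≤ Z → Real.sqrt (Real.sqrt Z) = Z ^ ((1:ℝ)/4) := by
    intro Z hZ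
    rw [Real.sqrt_eq_rpow, Real.sqrt_eq_rpow, ← Real.rpow_mul hZ]
    norm_num
  have hs2 : Real.sqrt 2 ≤ 2 := by
    nlinarith [Real.sq_sqrt (by norm_num : (0:ℝ) ≤ 2), Real.sqrt_nonneg 2]
  calc Real.sqrt (X + G)
      ≤ Real.sqrt (2 * (Real.sqrt X * Real.sqrt (X + Y))) := Real.sqrt_le_sqrt h1
    _ = Real.sqrt 2 * (Real.sqrt (Real.sqrt X) * Real.sqrt (Real.sqrt (X + Y))) := by
        rw [Real.sqrt_mul (by norm_num : (0:ℝ) ≤ 2), Real.sqrt_mul (Real.sqrt_nonneg X)]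
    _ = Real.sqrt 2 * (X ^ ((1:ℝ)/4) * (X + Y) ^ ((1:ℝ)/4)) := by
        rw [q X hXnn, q (X + Y) hXYnn]
    _ ≤ 2 * (X ^ ((1:ℝ)/4) * (X + Y) ^ ((1:ℝ)/4)) := by
        apply mul_le_mul_of_nonneg_right hs2
          (mul_nonneg (Real.rpow_nonneg hXnn _) (Real.rpow_nonneg hXYnn _))
    _ = 2 * X ^ ((1:ℝ)/4) * (X + Y) ^ ((1:ℝ)/4) := by ring
end
end
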